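/- Let n ≥ 1, δ > 0, let A : ℝ^n → Sym_n(ℝ) with A(y) positive semidefinite for every y, and let H : ℝ^n × ℝ^n → ℝ satisfy α|q|² − α' ≤ H(q, y) ≤ β|q|² + β' for all (q, y), where α, β > 0 and α', β' ≥ 0. Fix p ∈ ℝ^n. If w : ℝ^n → ℝ is a C², ℤ^n-periodic function satisfying −tr(A(y) D²w(y)) + H(∇w(y) + p, y) + δ w(y) = 0 for all y ∈ ℝ^n, then −β|p|² − β' ≤ δ w(y) ≤ −α|p|² + α' for all y ∈ ℝ^n. -/

import Mathlib

open scoped InnerProductSpace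

/-- The Hessian matrix of `w : ℝⁿ → ℝ` at `y`, with entries the iterated directional
derivatives along the standard basis vectors. -/
noncomputable def hessM {n : ℕ} (w : EuclideanSpace ℝ (Fin n) → ℝ)
    (y : EuclideanSpace ℝ (Fin n)) : Matrix (Fin n) (Fin n) ℝ :=
  fun i j =>
    fderiv ℝ (fun z => fderiv ℝ w z (EuclideanSpace.single j 1)) y (EuclideanSpace.single i 1)

/-- An integer vector `k ∈ ℤⁿ` viewed as an element of `ℝⁿ`. -/
noncomputable def intVec {n : ℕ} (k : Fin n → ℤ) : EuclideanSpace ℝ (Fin n) :=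
  (WithLp.equiv 2 (Fin n → ℝ)).symm (fun i => (k i : ℝ))

/-- A function on `ℝⁿ` is `ℤⁿ`-periodic. -/
def ZPeriodic {n : ℕ} (f : EuclideanSpace ℝ (Fin n) → ℝ) : Prop :=
  ∀ (y : EuclideanSpace ℝ (Fin n)) (k : Fin n → ℤ), f (y + intVec k) = f y

lemma hessM_eq {n : ℕ} {w : EuclideanSpace ℝ (Fin n) → ℝ} (hw : ContDiff ℝ 2 w)
    (y : EuclideanSpace ℝ (Fin n)) (i j : Fin n) :
    hessM w y i j = fderiv ℝ (fderiv ℝ w) y (EuclideanSpace.single i 1)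
      (EuclideanSpace.single j 1) := by
  have hd : DifferentiableAt ℝ (fderiv ℝ w) y :=
    ((hw.fderiv_right (m := 1) (le_refl 2)).differentiable one_ne_zero) y
  have h := ((ContinuousLinearMap.apply ℝ ℝ (EuclideanSpace.single (𝕜 := ℝ) j 1)).hasFDerivAt
    (x := fderiv ℝ w y)).comp y hd.hasFDerivAt
  have : fderiv ℝ (fun z => fderiv ℝ w z (EuclideanSpace.single j 1)) y
      = (ContinuousLinearMap.apply ℝ ℝ (EuclideanSpace.single (𝕜 := ℝ) j 1)).comp
        (fderiv ℝ (fderiv ℝ w) y) := h.fderiv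
  simp [hessM, this]

lemma max_snd_deriv {n : ℕ} {w : EuclideanSpace ℝ (Fin n) → ℝ} (hw : ContDiff ℝ 2 w)
    {y₀ : EuclideanSpace ℝ (Fin n)} (hmax : ∀ y, w y ≤ w y₀)
    (v : EuclideanSpace ℝ (Fin n)) :
    fderiv ℝ (fderiv ℝ w) y₀ v v ≤ 0 := by
  have hC1 : ContDiff ℝ 1 (fderiv ℝ w) := hw.fderiv_right (le_refl 2)
  have hdw : Differentiable ℝ w := hw.differentiable two_ne_zero
  have hfz : fderiv ℝ w y₀ = 0 := by
    have : IsLocalMax w y₀ := Filter.Eventually.of_forall hmax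
    exact this.fderiv_eq_zero
  set B := fderiv ℝ (fderiv ℝ w) y₀ with hB
  by_contra hpos
  push_neg at hpos
  set line : ℝ → EuclideanSpace ℝ (Fin n) := fun t => y₀ + t • v with hline
  have hlinederiv : ∀ t : ℝ, HasDerivAt line v t := by
    intro t
    have h := ((hasDerivAt_id t).smul_const v).const_add y₀
    rw [one_smul] at h
    exact h
  set φ : ℝ → ℝ := fun t => fderiv ℝ w (line t) v with hφ
  have hφderiv : HasDerivAt φ (B v v) 0 := by
    have hd : DifferentiableAt ℝ (fderiv ℝ w) (line 0) := by
      simpa [hline] using (hC1.differentiable one_ne_zero (line 0))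
    have h1 : HasFDerivAt (fun z => fderiv ℝ w z v)
        ((ContinuousLinearMap.apply ℝ ℝ v).comp (fderiv ℝ (fderiv ℝ w) (line 0))) (line 0) :=
      ((ContinuousLinearMap.apply ℝ ℝ v).hasFDerivAt).comp (line 0) hd.hasFDerivAt
    have := h1.comp_hasDerivAt 0 (hlinederiv 0)
    have e : line 0 = y₀ := by simp [hline]
    rw [e] at this
    exact this
  have hφ0 : φ 0 = 0 := by simp [hφ, hline, hfz]
  have hslope := hasDerivAt_iff_tendsto_slope.mp hφderiv
  have hev : ∀ᶠ t in nhdsWithin 0 {(0:ℝ)}ᶜ, 0 < slope φ 0 t :=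
    hslope.eventually (eventually_gt_nhds hpos)
  obtain ⟨ε, hε, hevε⟩ := Metric.mem_nhdsWithin_iff.mp hev
  have hφpos : ∀ t : ℝ, t ∈ Set.Ioo (0:ℝ) ε → 0 < φ t := by
    intro t ht
    have h1 : 0 < slope φ 0 t := by
      apply hevε
      constructor
      · simp [Metric.mem_ball, Real.dist_eq, abs_of_pos ht.1, ht.2]
      · simp [ne_of_gt ht.1]
    have : slope φ 0 t = φ t / t := by simp [slope, hφ0, div_eq_inv_mul]
    rw [this] at h1
    exact (div_pos_iff.mp h1).resolve_right (fun h => absurd ht.1 (not_lt.mpr h.2.le)) |>.1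
  set g : ℝ → ℝ := fun t => w (line t) with hg
  have hgderiv : ∀ t : ℝ, HasDerivAt g (φ t) t := by
    intro t
    exact ((hdw (line t)).hasFDerivAt).comp_hasDerivAt t (hlinederiv t)
  have hmono : StrictMonoOn g (Set.Icc 0 (ε/2)) := by
    apply strictMonoOn_of_deriv_pos (convex_Icc _ _)
    · exact (fun t _ => (hgderiv t).differentiableAt.continuousAt.continuousWithinAt)
    · intro t ht
      rw [interior_Icc] at ht
      rw [(hgderiv t).deriv]
      exact hφpos t ⟨ht.1, ht.2.trans (by linarith)⟩
  have h2 : g 0 < g (ε/2) :=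
    hmono (Set.left_mem_Icc.mpr (by linarith)) (Set.right_mem_Icc.mpr (by linarith)) (by linarith)
  have h3 : g (ε/2) ≤ g 0 := by simpa [hg, hline] using hmax (y₀ + (ε/2) • v)
  linarith

lemma min_snd_deriv {n : ℕ} {w : EuclideanSpace ℝ (Fin n) → ℝ} (hw : ContDiff ℝ 2 w)
    {y₁ : EuclideanSpace ℝ (Fin n)} (hmin : ∀ y, w y₁ ≤ w y)
    (v : EuclideanSpace ℝ (Fin n)) :
    0 ≤ fderiv ℝ (fderiv ℝ w) y₁ v v := by
  have h := max_snd_deriv (n := n) (w := fun y => -w y) hw.neg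
    (fun y => neg_le_neg (hmin y)) v
  have e1 : (fderiv ℝ (fun y => -w y)) = fun x => -(fderiv ℝ w x) :=
    funext fun x => fderiv_neg
  have e2 : fderiv ℝ (fderiv ℝ (fun y => -w y)) y₁ = -(fderiv ℝ (fderiv ℝ w) y₁) := by
    rw [e1]; exact fderiv_neg
  rw [e2] at h
  simp only [ContinuousLinearMap.neg_apply] at h
  linarith

lemma trace_eq_sum {n : ℕ} {A C : Matrix (Fin n) (Fin n) ℝ} (hC : A = C.conjTranspose * C)
    (B : EuclideanSpace ℝ (Fin n) →L[ℝ] EuclideanSpace ℝ (Fin n) →L[ℝ] ℝ)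
    {M : Matrix (Fin n) (Fin n) ℝ}
    (hM : ∀ i j, M i j = B (EuclideanSpace.single i 1) (EuclideanSpace.single j 1)) :
    (A * M).trace = ∑ k, B (∑ i, C k i • EuclideanSpace.single i 1)
      (∑ i, C k i • EuclideanSpace.single i 1) := by
  have lhs : (A * M).trace = ∑ i, ∑ j, ∑ k, C k i * C k j * M j i := by
    simp [Matrix.trace, Matrix.diag, Matrix.mul_apply, hC, Matrix.conjTranspose_apply,
      Finset.sum_mul]
  have rhs : ∀ k, B (∑ i, C k i • EuclideanSpace.single (𝕜 := ℝ) i 1)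
      (∑ i, C k i • EuclideanSpace.single (𝕜 := ℝ) i 1)
      = ∑ i, ∑ j, C k i * (C k j * M j i) := by
    intro k
    rw [map_sum]
    refine Finset.sum_congr rfl fun i _ => ?_
    rw [(B _).map_smul, map_sum, ContinuousLinearMap.sum_apply, Finset.smul_sum]
    refine Finset.sum_congr rfl fun j _ => ?_
    rw [B.map_smul, ContinuousLinearMap.smul_apply]
    simp [hM, mul_comm]
  rw [lhs]
  rw [show (∑ i, ∑ j, ∑ k, C k i * C k j * M j i) = ∑ i, ∑ k, ∑ j, C k i * C k j * M j i from
    Finset.sum_congr rfl fun i _ => Finset.sum_comm]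
  rw [Finset.sum_comm]
  refine Finset.sum_congr rfl fun k _ => ?_
  rw [rhs k]
  refine Finset.sum_congr rfl fun i _ => Finset.sum_congr rfl fun j _ => by ring

lemma zperiodic_exists_max {n : ℕ} {w : EuclideanSpace ℝ (Fin n) → ℝ}
    (hc : Continuous w) (hper : ZPeriodic w) :
    (∃ y₀, ∀ y, w y ≤ w y₀) ∧ (∃ y₁, ∀ y, w y₁ ≤ w y) := by
  set K : Set (EuclideanSpace ℝ (Fin n)) := Metric.closedBall 0 (Real.sqrt n) with hK
  have hKc : IsCompact K := isCompact_closedBall _ _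
  have hKne : K.Nonempty := ⟨0, Metric.mem_closedBall_self (Real.sqrt_nonneg _)⟩
  have reduce : ∀ y : EuclideanSpace ℝ (Fin n), ∃ z ∈ K, w z = w y := by
    intro y
    set k : Fin n → ℤ := fun i => ⌊y i⌋ with hk
    refine ⟨y - intVec k, ?_, ?_⟩
    · rw [Metric.mem_closedBall, dist_zero_right]
      rw [EuclideanSpace.norm_eq]
      apply Real.sqrt_le_sqrt
      have : ∀ i, ‖(y - intVec k) i‖ ^ 2 ≤ 1 := by
        intro i
        have h1 : (y - intVec k) i = y i - ⌊y i⌋ := by rfl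
        rw [h1]
        have h2 : |y i - ⌊y i⌋| ≤ 1 := by
          rw [abs_le]
          constructor
          · linarith [Int.floor_le (y i)]
          · linarith [Int.lt_floor_add_one (y i)]
        calc ‖y i - (⌊y i⌋:ℝ)‖ ^ 2 = |y i - ⌊y i⌋| ^ 2 := by rw [Real.norm_eq_abs]
          _ ≤ 1 ^ 2 := by exact pow_le_pow_left₀ (abs_nonneg _) h2 2
          _ = 1 := one_pow 2
      calc ∑ i, ‖(y - intVec k) i‖ ^ 2 ≤ ∑ _i : Fin n, (1:ℝ) :=
            Finset.sum_le_sum fun i _ => this i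
        _ = n := by simp
    · have := hper (y - intVec k) k
      simpa using this.symm
  constructor
  · obtain ⟨y₀, _, hy₀⟩ := hKc.exists_isMaxOn hKne hc.continuousOn
    refine ⟨y₀, fun y => ?_⟩
    obtain ⟨z, hz, hze⟩ := reduce y
    rw [← hze]; exact hy₀ hz
  · obtain ⟨y₁, _, hy₁⟩ := hKc.exists_isMinOn hKne hc.continuousOn
    refine ⟨y₁, fun y => ?_⟩
    obtain ⟨z, hz, hze⟩ := reduce y
    rw [← hze]; exact hy₁ hz

/-- Uniform bounds on `δ w` for a classical periodic solution of the
δ-penalized cell equation. -/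
theorem penalized_solution_bounds
    (n : ℕ) (hn : 1 ≤ n) (δ : ℝ) (hδ : 0 < δ)
    (A : EuclideanSpace ℝ (Fin n) → Matrix (Fin n) (Fin n) ℝ)
    (hAsymm : ∀ y, (A y).IsSymm) (hApsd : ∀ y, (A y).PosSemidef)
    (H : EuclideanSpace ℝ (Fin n) → EuclideanSpace ℝ (Fin n) → ℝ)
    (α β α' β' : ℝ) (hα : 0 < α) (hβ : 0 < β) (hα' : 0 ≤ α') (hβ' : 0 ≤ β')
    (hgrowth : ∀ q y, α * ‖q‖ ^ 2 - α' ≤ H q y ∧ H q y ≤ β * ‖q‖ ^ 2 + β')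
    (p : EuclideanSpace ℝ (Fin n))
    (w : EuclideanSpace ℝ (Fin n) → ℝ)
    (hw : ContDiff ℝ 2 w) (hwper : ZPeriodic w)
    (heq : ∀ y, -((A y) * hessM w y).trace + H (gradient w y + p) y + δ * w y = 0) :
    ∀ y, -β * ‖p‖ ^ 2 - β' ≤ δ * w y ∧ δ * w y ≤ -α * ‖p‖ ^ 2 + α' := by
  obtain ⟨⟨y₀, hy₀⟩, ⟨y₁, hy₁⟩⟩ := zperiodic_exists_max (hw.continuous) hwper
  -- gradient vanishes at extrema
  have hgrad₀ : gradient w y₀ = 0 := by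
    have hfz : fderiv ℝ w y₀ = 0 :=
      IsLocalMax.fderiv_eq_zero (Filter.Eventually.of_forall hy₀)
    simp [gradient, hfz]
  have hgrad₁ : gradient w y₁ = 0 := by
    have hfz : fderiv ℝ w y₁ = 0 :=
      IsLocalMin.fderiv_eq_zero (Filter.Eventually.of_forall hy₁)
    simp [gradient, hfz]
  -- trace sign at extrema
  have htr₀ : ((A y₀) * hessM w y₀).trace ≤ 0 := by
    obtain ⟨C, hC⟩ : ∃ C : Matrix (Fin n) (Fin n) ℝ, A y₀ = C.conjTranspose * C := by
      open scoped MatrixOrder in exact CStarAlgebra.nonneg_iff_eq_star_mul_self.mp (hApsd y₀).nonneg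
    rw [trace_eq_sum hC (fderiv ℝ (fderiv ℝ w) y₀) (hessM_eq hw y₀)]
    exact Finset.sum_nonpos fun k _ => max_snd_deriv hw hy₀ _
  have htr₁ : 0 ≤ ((A y₁) * hessM w y₁).trace := by
    obtain ⟨C, hC⟩ : ∃ C : Matrix (Fin n) (Fin n) ℝ, A y₁ = C.conjTranspose * C := by
      open scoped MatrixOrder in exact CStarAlgebra.nonneg_iff_eq_star_mul_self.mp (hApsd y₁).nonneg
    rw [trace_eq_sum hC (fderiv ℝ (fderiv ℝ w) y₁) (hessM_eq hw y₁)]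
    exact Finset.sum_nonneg fun k _ => min_snd_deriv hw hy₁ _
  -- bounds at the extrema
  have hub : δ * w y₀ ≤ -α * ‖p‖ ^ 2 + α' := by
    have h := heq y₀
    rw [hgrad₀, zero_add] at h
    have := (hgrowth p y₀).1
    linarith
  have hlb : -β * ‖p‖ ^ 2 - β' ≤ δ * w y₁ := by
    have h := heq y₁
    rw [hgrad₁, zero_add] at h
    have := (hgrowth p y₁).2
    linarith
  intro y
  constructor
  · have := mul_le_mul_of_nonneg_left (hy₁ y) hδ.le
    linarith
  · have := mul_le_mul_of_nonneg_left (hy₀ y) hδ.le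
    linarith
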